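/- Let p > 2 be a real number. There exists a constant C = C(p) > 0 such that for all x, y ∈ ℝⁿ, | |x+y|^{p-2}(x+y) − |x|^{p-2}x − |y|^{p-2}y | ≤ C(|x|^{p-2}|y| + |x| |y|^{p-2}), where the left-hand side is the Euclidean norm of the vector difference. -/

import Mathlib

open Real

lemma aux_add_rpow_le {q x y : ℝ} (hq0 : 0 ≤ q) (hq1 : q ≤ 1) (hx : 0 ≤ x) (hy : 0 ≤ y) :
    (x + y) ^ q ≤ x ^ q + y ^ q := by
  have := NNReal.rpow_add_le_add_rpow ⟨x, hx⟩ ⟨y, hy⟩ hq0 hq1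
  have h := NNReal.coe_le_coe.2 this
  push_cast [NNReal.coe_rpow] at h
  exact h

lemma aux_bernoulli {q a b : ℝ} (hq : 1 ≤ q) (hb : 0 ≤ b) (hba : b ≤ a) :
    a ^ q - b ^ q ≤ q * a ^ (q - 1) * (a - b) := by
  rcases eq_or_lt_of_le (hb.trans hba) with h0 | ha
  · have hb0 : b = 0 := le_antisymm (hba.trans h0.ge) hb
    simp [← h0, hb0]
  · have hs : (-1 : ℝ) ≤ (b - a) / a := by
      rw [le_div_iff₀ ha]; linarith
    have hber := one_add_mul_self_le_rpow_one_add hs hq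
    have h1 : 1 + (b - a) / a = b / a := by field_simp; ring
    rw [h1] at hber
    have key : a ^ q * (1 + q * ((b - a) / a)) ≤ b ^ q := by
      calc a ^ q * (1 + q * ((b - a) / a)) ≤ a ^ q * ((b / a) ^ q) :=
            mul_le_mul_of_nonneg_left hber (rpow_nonneg ha.le q)
        _ = b ^ q := by
            rw [Real.div_rpow hb ha.le]
            field_simp
    have haq1 : a ^ (q - 1) = a ^ q / a := by
      rw [Real.rpow_sub ha, Real.rpow_one]
    have heq : a ^ q * (1 + q * ((b - a) / a)) = a ^ q + q * (a ^ q / a) * (b - a) := by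
      field_simp
    rw [heq] at key
    rw [haq1]
    linarith

lemma aux_key {q : ℝ} (hq : 0 < q) (s t d : ℝ) (hs : 0 ≤ s) (ht : 0 ≤ t) (hd : 0 ≤ d)
    (h : |s - t| ≤ d) :
    |s ^ q - t ^ q| * t ≤ (q * 2 ^ q + 1) * (d ^ q * t + d * t ^ q) := by
  have hrhs : 0 ≤ d ^ q * t + d * t ^ q := by positivity
  rcases le_or_gt 1 q with hq1 | hq1
  · -- q ≥ 1
    have hstd : s ≤ t + d := by
      have := abs_le.1 h
      linarith [this.1, this.2]
    have hbound : |s ^ q - t ^ q| ≤ q * (t + d) ^ (q - 1) * d := by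
      rcases le_total s t with hst | hts
      · have h1 : t ^ q - s ^ q ≤ q * t ^ (q - 1) * (t - s) := aux_bernoulli hq1 hs hst
        have h2 : s ^ q ≤ t ^ q := Real.rpow_le_rpow hs hst hq.le
        have h3 : t ^ (q - 1) ≤ (t + d) ^ (q - 1) :=
          Real.rpow_le_rpow ht (by linarith) (by linarith)
        have h4 : t - s ≤ d := by have := abs_le.1 h; linarith [this.1]
        rw [abs_sub_comm, abs_of_nonneg (by linarith)]
        calc t ^ q - s ^ q ≤ q * t ^ (q - 1) * (t - s) := h1
          _ ≤ q * (t + d) ^ (q - 1) * d := by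
              apply mul_le_mul _ h4 (by linarith) (by positivity)
              exact mul_le_mul_of_nonneg_left h3 (by linarith)
      · have h1 : s ^ q - t ^ q ≤ q * s ^ (q - 1) * (s - t) := aux_bernoulli hq1 ht hts
        have h2 : t ^ q ≤ s ^ q := Real.rpow_le_rpow ht hts hq.le
        have h3 : s ^ (q - 1) ≤ (t + d) ^ (q - 1) :=
          Real.rpow_le_rpow hs hstd (by linarith)
        have h4 : s - t ≤ d := by have := abs_le.1 h; linarith [this.2]
        rw [abs_of_nonneg (by linarith)]
        calc s ^ q - t ^ q ≤ q * s ^ (q - 1) * (s - t) := h1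
          _ ≤ q * (t + d) ^ (q - 1) * d := by
              apply mul_le_mul _ h4 (by linarith) (by positivity)
              exact mul_le_mul_of_nonneg_left h3 (by linarith)
    have hmax : (t + d) ^ (q - 1) ≤ 2 ^ (q - 1) * (t ^ (q - 1) + d ^ (q - 1)) := by
      have h2m : t + d ≤ 2 * max t d := by
        rcases le_total t d with h' | h' <;> simp [max_eq_right, max_eq_left, h'] <;> linarith
      calc (t + d) ^ (q - 1) ≤ (2 * max t d) ^ (q - 1) :=
            Real.rpow_le_rpow (by linarith) h2m (by linarith)
        _ = 2 ^ (q - 1) * (max t d) ^ (q - 1) := Real.mul_rpow (by norm_num) (le_max_of_le_left ht)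
        _ ≤ 2 ^ (q - 1) * (t ^ (q - 1) + d ^ (q - 1)) := by
            apply mul_le_mul_of_nonneg_left _ (by positivity)
            rcases le_total t d with h' | h'
            · rw [max_eq_right h']; linarith [Real.rpow_nonneg ht (q-1)]
            · rw [max_eq_left h']; linarith [Real.rpow_nonneg hd (q-1)]
    have hrw : ∀ u : ℝ, 0 ≤ u → u ^ (q - 1) * u = u ^ q := by
      intro u hu
      have h0 : (q - 1) + 1 = q := by ring
      have h1 : (q - 1) + 1 ≠ 0 := by rw [h0]; exact hq.ne'
      have := Real.rpow_add' hu h1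
      rw [Real.rpow_one] at this
      rw [← this, h0]
    have h2pow : (2:ℝ) ^ (q - 1) ≤ 2 ^ q :=
      Real.rpow_le_rpow_of_exponent_le one_le_two (by linarith)
    have hc : q * 2 ^ (q - 1) ≤ q * 2 ^ q + 1 := by nlinarith
    calc |s ^ q - t ^ q| * t ≤ (q * (t + d) ^ (q - 1) * d) * t :=
          mul_le_mul_of_nonneg_right hbound ht
      _ ≤ (q * (2 ^ (q - 1) * (t ^ (q - 1) + d ^ (q - 1))) * d) * t := by
          apply mul_le_mul_of_nonneg_right _ ht
          apply mul_le_mul_of_nonneg_right _ hd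
          exact mul_le_mul_of_nonneg_left hmax hq.le
      _ = q * 2 ^ (q - 1) * (d * (t ^ (q - 1) * t) + (d ^ (q - 1) * d) * t) := by ring
      _ = q * 2 ^ (q - 1) * (d * t ^ q + d ^ q * t) := by rw [hrw t ht, hrw d hd]
      _ ≤ (q * 2 ^ q + 1) * (d * t ^ q + d ^ q * t) :=
          mul_le_mul_of_nonneg_right hc (by positivity)
      _ = (q * 2 ^ q + 1) * (d ^ q * t + d * t ^ q) := by ring
  · -- q < 1
    have hbound : |s ^ q - t ^ q| ≤ d ^ q := by
      rcases le_total s t with hst | hts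
      · rw [abs_sub_comm, abs_of_nonneg (sub_nonneg.2 (Real.rpow_le_rpow hs hst hq.le))]
        have : t ^ q ≤ s ^ q + (t - s) ^ q := by
          have := aux_add_rpow_le hq.le hq1.le hs (sub_nonneg.2 hst)
          rwa [add_sub_cancel] at this
        have h4 : t - s ≤ d := by have := abs_le.1 h; linarith [this.1]
        have h5 : (t - s) ^ q ≤ d ^ q := Real.rpow_le_rpow (by linarith) h4 hq.le
        linarith
      · rw [abs_of_nonneg (sub_nonneg.2 (Real.rpow_le_rpow ht hts hq.le))]
        have : s ^ q ≤ t ^ q + (s - t) ^ q := by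
          have := aux_add_rpow_le hq.le hq1.le ht (sub_nonneg.2 hts)
          rwa [add_sub_cancel] at this
        have h4 : s - t ≤ d := by have := abs_le.1 h; linarith [this.2]
        have h5 : (s - t) ^ q ≤ d ^ q := Real.rpow_le_rpow (by linarith) h4 hq.le
        linarith
    calc |s ^ q - t ^ q| * t ≤ d ^ q * t := mul_le_mul_of_nonneg_right hbound ht
      _ ≤ (q * 2 ^ q + 1) * (d ^ q * t + d * t ^ q) := by
          nlinarith [Real.rpow_nonneg hd q, Real.rpow_nonneg ht q,
            mul_nonneg (Real.rpow_nonneg hd q) ht, mul_nonneg hd (Real.rpow_nonneg ht q),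
            mul_nonneg (mul_nonneg hq.le (Real.rpow_nonneg (by norm_num : (0:ℝ) ≤ 2) q)) hrhs]

theorem stmt_8 (n : ℕ) (hn : 1 ≤ n) (p : ℝ) (hp : 2 < p) :
    ∃ C : ℝ, 0 < C ∧ ∀ x y : EuclideanSpace ℝ (Fin n),
      ‖(‖x + y‖ ^ (p - 2)) • (x + y) - (‖x‖ ^ (p - 2)) • x - (‖y‖ ^ (p - 2)) • y‖ ≤
        C * (‖x‖ ^ (p - 2) * ‖y‖ + ‖x‖ * ‖y‖ ^ (p - 2)) := by
  have hq : 0 < p - 2 := by linarith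
  set K : ℝ := (p - 2) * 2 ^ (p - 2) + 1 with hK
  have hKpos : 0 < K := by positivity
  refine ⟨2 * K, by positivity, ?_⟩
  intro x y
  have hdecomp : (‖x + y‖ ^ (p - 2)) • (x + y) - (‖x‖ ^ (p - 2)) • x - (‖y‖ ^ (p - 2)) • y
      = (‖x + y‖ ^ (p - 2) - ‖x‖ ^ (p - 2)) • x + (‖x + y‖ ^ (p - 2) - ‖y‖ ^ (p - 2)) • y := by
    rw [smul_add, sub_smul, sub_smul]; abel
  rw [hdecomp]
  have h1 : |‖x + y‖ - ‖x‖| ≤ ‖y‖ := by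
    have := abs_norm_sub_norm_le (x + y) x
    simpa using this
  have h2 : |‖x + y‖ - ‖y‖| ≤ ‖x‖ := by
    have := abs_norm_sub_norm_le (x + y) y
    simpa using this
  have k1 := aux_key hq ‖x + y‖ ‖x‖ ‖y‖ (norm_nonneg _) (norm_nonneg _) (norm_nonneg _) h1
  have k2 := aux_key hq ‖x + y‖ ‖y‖ ‖x‖ (norm_nonneg _) (norm_nonneg _) (norm_nonneg _) h2
  have k1' : |‖x + y‖ ^ (p - 2) - ‖x‖ ^ (p - 2)| * ‖x‖
      ≤ K * (‖x‖ ^ (p - 2) * ‖y‖ + ‖x‖ * ‖y‖ ^ (p - 2)) := by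
    rw [hK]; calc _ ≤ _ := k1
      _ = ((p - 2) * 2 ^ (p - 2) + 1) * (‖x‖ ^ (p - 2) * ‖y‖ + ‖x‖ * ‖y‖ ^ (p - 2)) := by ring
  have k2' : |‖x + y‖ ^ (p - 2) - ‖y‖ ^ (p - 2)| * ‖y‖
      ≤ K * (‖x‖ ^ (p - 2) * ‖y‖ + ‖x‖ * ‖y‖ ^ (p - 2)) := by
    rw [hK]; calc _ ≤ _ := k2
      _ = ((p - 2) * 2 ^ (p - 2) + 1) * (‖x‖ ^ (p - 2) * ‖y‖ + ‖x‖ * ‖y‖ ^ (p - 2)) := by ring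
  calc ‖(‖x + y‖ ^ (p - 2) - ‖x‖ ^ (p - 2)) • x + (‖x + y‖ ^ (p - 2) - ‖y‖ ^ (p - 2)) • y‖
      ≤ ‖(‖x + y‖ ^ (p - 2) - ‖x‖ ^ (p - 2)) • x‖ + ‖(‖x + y‖ ^ (p - 2) - ‖y‖ ^ (p - 2)) • y‖ :=
        norm_add_le _ _
    _ = |‖x + y‖ ^ (p - 2) - ‖x‖ ^ (p - 2)| * ‖x‖ + |‖x + y‖ ^ (p - 2) - ‖y‖ ^ (p - 2)| * ‖y‖ := by
        rw [norm_smul, norm_smul, Real.norm_eq_abs, Real.norm_eq_abs]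
    _ ≤ K * (‖x‖ ^ (p - 2) * ‖y‖ + ‖x‖ * ‖y‖ ^ (p - 2))
        + K * (‖x‖ ^ (p - 2) * ‖y‖ + ‖x‖ * ‖y‖ ^ (p - 2)) := add_le_add k1' k2'
    _ = 2 * K * (‖x‖ ^ (p - 2) * ‖y‖ + ‖x‖ * ‖y‖ ^ (p - 2)) := by ring
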